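/- For every prime p and every integer k ≥ 0, P(p, k) ≤ p^{−k²}/(1 − p^{−1} − p^{−2}) ≤ 4·p^{−k²}. -/

import Mathlib

/-- The Cohen–Lenstra probability that a random abelian `p`-group has rank `r`:
`P(p, r) = p^(-r²) · (∏_{i=1}^∞ (1 - p^{-i})) / (∏_{i=1}^r (1 - p^{-i}))²`. -/
noncomputable def CLrank (p r : ℕ) : ℝ :=
  (∏' i : ℕ, (1 - 1 / (p : ℝ) ^ (i + 1))) /
    ((p : ℝ) ^ (r ^ 2) * (∏ i ∈ Finset.range r, (1 - 1 / (p : ℝ) ^ (i + 1))) ^ 2)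

lemma aux_one_sub_sum_le_prod (a : ℕ → ℝ) (h0 : ∀ i, 0 ≤ a i) (h1 : ∀ i, a i ≤ 1) :
    ∀ n, 1 - ∑ i ∈ Finset.range n, a i ≤ ∏ i ∈ Finset.range n, (1 - a i) := by
  intro n
  induction n with
  | zero => simp
  | succ n ih =>
    rw [Finset.sum_range_succ, Finset.prod_range_succ]
    have hs : 0 ≤ ∑ i ∈ Finset.range n, a i := Finset.sum_nonneg fun i _ => h0 i
    nlinarith [mul_le_mul_of_nonneg_right ih (by linarith [h1 n] : (0:ℝ) ≤ 1 - a n),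
      mul_nonneg hs (h0 n)]

set_option maxHeartbeats 4000000 in
theorem CLrank_le (p : ℕ) (hp : p.Prime) (k : ℕ) :
    CLrank p k ≤ (1 / (p : ℝ) ^ (k ^ 2)) / (1 - 1 / (p : ℝ) - 1 / (p : ℝ) ^ 2) ∧
      (1 / (p : ℝ) ^ (k ^ 2)) / (1 - 1 / (p : ℝ) - 1 / (p : ℝ) ^ 2) ≤
        4 / (p : ℝ) ^ (k ^ 2) := by
  have hp2 : (2:ℝ) ≤ p := by exact_mod_cast hp.two_le
  have hp0 : (0:ℝ) < p := by linarith
  unfold CLrank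
  set x : ℝ := 1 / p with hxdef
  have hx0 : 0 < x := by positivity
  have hx2 : x ≤ 1/2 := by
    rw [hxdef, div_le_div_iff₀ hp0 two_pos]; linarith
  have hx1 : x < 1 := by linarith
  have hpow : ∀ i : ℕ, (1:ℝ) / (p : ℝ) ^ (i+1) = x ^ (i+1) := fun i => by
    rw [hxdef, div_pow, one_pow]
  set f : ℕ → ℝ := fun i => 1 - 1 / (p : ℝ) ^ (i + 1) with hf
  have hfx : ∀ i, f i = 1 - x ^ (i+1) := fun i => by
    show 1 - 1 / (p : ℝ) ^ (i + 1) = 1 - x ^ (i+1)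
    rw [hpow]
  have hxple : ∀ i : ℕ, x ^ (i+1) ≤ 1/2 := by
    intro i
    calc x ^ (i+1) ≤ x ^ 1 := pow_le_pow_of_le_one hx0.le hx1.le (by omega)
    _ ≤ 1/2 := by rwa [pow_one]
  have hxp0 : ∀ i : ℕ, 0 < x ^ (i+1) := fun i => by positivity
  have hfl : ∀ i, 1/2 ≤ f i := fun i => by rw [hfx]; linarith [hxple i]
  have hfu : ∀ i, f i ≤ 1 := fun i => by rw [hfx]; linarith [hxp0 i]
  have hfpos : ∀ i, 0 < f i := fun i => lt_of_lt_of_le (by norm_num) (hfl i)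
  have hgeo : Summable (fun i : ℕ => x ^ i) := summable_geometric_of_lt_one hx0.le hx1
  -- summability of logs
  have hsum : Summable (fun i => Real.log (f i)) := by
    rw [← summable_neg_iff]
    refine Summable.of_nonneg_of_le (f := fun i => 2 * x ^ (i+1)) (fun i => ?_) (fun i => ?_) ?_
    · simp only [neg_nonneg]
      exact Real.log_nonpos (hfpos i).le (hfu i)
    · have h2 := Real.log_le_sub_one_of_pos (inv_pos.mpr (hfpos i))
      rw [Real.log_inv] at h2
      have hc : f i * (f i)⁻¹ = 1 := mul_inv_cancel₀ (hfpos i).ne'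
      have hinv : (f i)⁻¹ ≤ 1 + 2 * x ^ (i+1) := by
        have hfx' : f i = 1 - x ^ (i+1) := hfx i
        have h3 : 1 ≤ (f i) * (1 + 2 * x ^ (i+1)) := by
          rw [hfx']; nlinarith [hxple i, hxp0 i]
        calc (f i)⁻¹ = (f i)⁻¹ * 1 := by ring
        _ ≤ (f i)⁻¹ * ((f i) * (1 + 2 * x ^ (i+1))) :=
            mul_le_mul_of_nonneg_left h3 (inv_pos.mpr (hfpos i)).le
        _ = 1 + 2 * x ^ (i+1) := by
            rw [← mul_assoc, inv_mul_cancel₀ (hfpos i).ne']; ring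
      show -Real.log (f i) ≤ 2 * x ^ (i+1)
      linarith
    · exact ((hgeo.mul_left (2 * x)).congr (fun i => by ring))
  have hmulshift : ∀ m : ℕ, Multipliable fun i => f (i + m) := by
    intro m
    exact Real.multipliable_of_summable_log (fun i => hfpos _) ((summable_nat_add_iff m).2 hsum)
  set N : ℝ := ∏' i, f i with hN
  set F : ℝ := ∏ i ∈ Finset.range k, f i with hF
  -- N ≤ F
  have hmulk := hmulshift k
  have hNk : F * (∏' i, f (i + k)) = N := Multipliable.prod_mul_tprod_nat_mul' hmulk
  have hF0 : 0 < F := Finset.prod_pos fun i _ => hfpos i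
  have hT1 : (∏' i, f (i + k)) ≤ 1 := by
    refine le_of_tendsto' hmulk.hasProd.tendsto_prod_nat (fun n => ?_)
    exact Finset.prod_le_one (fun i _ => (hfpos _).le) (fun i _ => hfu _)
  have hNF : N ≤ F := by
    rw [← hNk]
    nlinarith
  -- lower bound on N
  have hmul2 := hmulshift 2
  have hT2 : 1 - (1 - x)⁻¹ * x ^ 3 ≤ ∏' i, f (i + 2) := by
    refine ge_of_tendsto' hmul2.hasProd.tendsto_prod_nat (fun n => ?_)
    have key := aux_one_sub_sum_le_prod (fun i => x ^ (i + 3))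
      (fun i => by positivity) (fun i => by have := hxple (i+2); linarith) n
    have hsumle : ∑ i ∈ Finset.range n, x ^ (i + 3) ≤ (1 - x)⁻¹ * x ^ 3 := by
      have h1 : ∑ i ∈ Finset.range n, x ^ (i + 3)
          = (∑ i ∈ Finset.range n, x ^ i) * x ^ 3 := by
        rw [Finset.sum_mul]; exact Finset.sum_congr rfl fun i _ => by ring
      have h2 : (∑ i ∈ Finset.range n, x ^ i) ≤ (1 - x)⁻¹ := by
        calc (∑ i ∈ Finset.range n, x ^ i) ≤ ∑' i : ℕ, x ^ i :=
            Summable.sum_le_tsum _ (fun i _ => by positivity) hgeo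
        _ = (1 - x)⁻¹ := tsum_geometric_of_lt_one hx0.le hx1
      rw [h1]
      exact mul_le_mul_of_nonneg_right h2 (by positivity)
    have hprodeq : ∏ i ∈ Finset.range n, (1 - x ^ (i + 3))
        = ∏ i ∈ Finset.range n, f (i + 2) := by
      exact Finset.prod_congr rfl fun i _ => by rw [hfx]
    rw [← hprodeq]
    calc (1:ℝ) - (1 - x)⁻¹ * x ^ 3 ≤ 1 - ∑ i ∈ Finset.range n, x ^ (i + 3) := by linarith
    _ ≤ _ := key
  have hN2 : (f 0 * f 1) * (∏' i, f (i + 2)) = N := by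
    have := Multipliable.prod_mul_tprod_nat_mul' hmul2
    rwa [Finset.prod_range_succ, Finset.prod_range_one] at this
  have hD : (0:ℝ) < 1 - x - x ^ 2 := by nlinarith
  have hDx : 1 - 1 / (p:ℝ) - 1 / (p:ℝ) ^ 2 = 1 - x - x ^ 2 := by
    rw [hxdef, div_pow, one_pow]
  have hxne : (1:ℝ) - x ≠ 0 := by intro h; rw [sub_eq_zero] at h; linarith
  have hND : 1 - x - x ^ 2 ≤ N := by
    have hf0 : f 0 = 1 - x := by rw [hfx]; norm_num
    have hf1 : f 1 = 1 - x ^ 2 := hfx 1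
    have hT2pos : (0:ℝ) ≤ 1 - (1 - x)⁻¹ * x ^ 3 := by
      have h1 : (1 - x)⁻¹ ≤ 2 := by
        rw [inv_le_comm₀ (by linarith) (by norm_num)]; linarith
      nlinarith [pow_le_pow_of_le_one hx0.le hx1.le (show 3 ≤ 3 by omega),
        pow_nonneg hx0.le 3, pow_le_one₀ hx0.le hx1.le (n := 3)]
    have hfprod : (0:ℝ) ≤ f 0 * f 1 := mul_nonneg (hfpos 0).le (hfpos 1).le
    have step : (f 0 * f 1) * (1 - (1 - x)⁻¹ * x ^ 3) ≤ N := by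
      rw [← hN2]
      exact mul_le_mul_of_nonneg_left hT2 hfprod
    have hval : (f 0 * f 1) * (1 - (1 - x)⁻¹ * x ^ 3) = 1 - x - x ^ 2 + x ^ 5 := by
      rw [hf0, hf1]
      field_simp
      ring
    rw [hval] at step
    nlinarith [pow_nonneg hx0.le 5]
  have hN0 : 0 < N := lt_of_lt_of_le hD hND
  have hP0 : (0:ℝ) < (p:ℝ) ^ (k ^ 2) := by positivity
  rw [hDx]
  constructor
  · rw [div_le_div_iff₀ (by positivity) hD]
    have hr : 1 / (p:ℝ) ^ (k ^ 2) * ((p:ℝ) ^ (k ^ 2) * F ^ 2) = F ^ 2 := by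
      field_simp
    rw [hr]
    nlinarith [mul_le_mul_of_nonneg_left hND hN0.le, mul_self_le_mul_self hN0.le hNF]
  · rw [div_div, div_le_div_iff₀ (by positivity) hP0]
    have hD4 : (1:ℝ)/4 ≤ 1 - x - x ^ 2 := by nlinarith
    nlinarith [mul_le_mul_of_nonneg_left hD4 hP0.le]
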